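/- For every β > 0, the kernel K(x,y) = (1 − 2xy + y²)^{−β} is strictly totally positive on (−1,1) × (−1,1). -/

import Mathlib

open Real Set

lemma base_pos {s w x : ℝ} (hs : s = 1 ∨ s = 0 ∨ s = -1) (hw : 1 < w) (hx : x ∈ Ioo (-1:ℝ) 1) :
    0 < w + s * x := by
  obtain ⟨h1, h2⟩ := hx
  rcases hs with h | h | h <;> rw [h] <;> nlinarith

lemma bracket_ne {sp sq wp wq : ℝ} (hsp : sp = 1 ∨ sp = 0 ∨ sp = -1)
    (hsq : sq = 1 ∨ sq = 0 ∨ sq = -1) (hsp0 : sp ≠ 0)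
    (hwp : 1 < wp) (hwq : 1 < wq) (hne : sp ≠ sq ∨ wp ≠ wq) :
    sp * wq - sq * wp ≠ 0 := by
  have hsp' : sp = 1 ∨ sp = -1 := by
    rcases hsp with h | h | h
    · exact Or.inl h
    · exact absurd h hsp0
    · exact Or.inr h
  rcases hsp' with h | h <;> rcases hsq with h' | h' | h' <;> subst h <;> subst h' <;> intro hc
  · exact (hne.resolve_left (by simp)) (by linarith)
  · linarith
  · linarith
  · linarith
  · linarith
  · exact (hne.resolve_left (by simp)) (by linarith)

lemma zero_count : ∀ (n : ℕ) (γ : ℝ), 0 < γ →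
    ∀ (s w c : Fin n → ℝ),
    (∀ j, s j = 1 ∨ s j = 0 ∨ s j = -1) →
    (∀ j k, s j = 0 → s k = 0 → j = k) →
    (∀ j, 1 < w j) →
    (∀ j k, s j = s k → w j = w k → j = k) →
    (∃ j, c j ≠ 0) →
    ∀ z : Fin n → ℝ, StrictMono z → (∀ i, z i ∈ Set.Ioo (-1:ℝ) 1) →
    (∀ i, ∑ j, c j * (w j + s j * z i) ^ (-γ) = 0) → False := by
  intro n
  induction n with
  | zero => rintro γ _ s w c _ _ _ _ ⟨j, _⟩ _ _ _ _; exact j.elim0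
  | succ n IH =>
    intro γ hγ s w c hs hs0 hw hinj hc z hz hzI hzero
    by_cases hone : ∀ j k, c j ≠ 0 → c k ≠ 0 → j = k
    · obtain ⟨j₀, hj₀⟩ := hc
      have h0 := hzero 0
      rw [Finset.sum_eq_single j₀] at h0
      · exact absurd h0 (mul_ne_zero hj₀
          (ne_of_gt (Real.rpow_pos_of_pos (base_pos (hs j₀) (hw j₀) (hzI 0)) _)))
      · intro j _ hj
        have hcj : c j = 0 := by by_contra hcj; exact hj (hone j j₀ hcj hj₀)
        rw [hcj, zero_mul]
      · intro habs; exact absurd (Finset.mem_univ j₀) habs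
    · push_neg at hone
      obtain ⟨j₁, j₂, hc1, hc2, hne12⟩ := hone
      obtain ⟨p, q, hsp, hcq, hqp⟩ : ∃ p q : Fin (n+1), s p ≠ 0 ∧ c q ≠ 0 ∧ q ≠ p := by
        by_cases h1 : s j₁ = 0
        · exact ⟨j₂, j₁, fun h2 => hne12 (hs0 j₁ j₂ h1 h2), hc1, hne12⟩
        · exact ⟨j₁, j₂, h1, hc2, Ne.symm hne12⟩
      set H : ℝ → ℝ := fun t => ∑ j, (c j * (s p * w j - s j * w p)) * (w j + s j * t) ^ (-(γ+1))
        with hHdef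
      have key : ∀ t ∈ Ioo (-1:ℝ) 1,
          HasDerivAt (fun u => (w p + s p * u) ^ γ * ∑ j, c j * (w j + s j * u) ^ (-γ))
            (γ * (w p + s p * t) ^ (γ-1) * H t) t := by
        intro t ht
        have hApos : 0 < w p + s p * t := base_pos (hs p) (hw p) ht
        have hA : HasDerivAt (fun u : ℝ => w p + s p * u) (s p) t := by
          simpa using ((hasDerivAt_id t).const_mul (s p)).const_add (w p)
        have hAp : HasDerivAt (fun u => (w p + s p * u) ^ γ)
            (s p * γ * (w p + s p * t) ^ (γ-1)) t := hA.rpow_const (Or.inl hApos.ne')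
        have hBpos : ∀ j : Fin (n+1), 0 < w j + s j * t := fun j => base_pos (hs j) (hw j) ht
        have hf : HasDerivAt (fun u => ∑ j, c j * (w j + s j * u) ^ (-γ))
            (∑ j, c j * (s j * (-γ) * (w j + s j * t) ^ (-γ - 1))) t := by
          apply HasDerivAt.fun_sum
          intro j _
          have hB : HasDerivAt (fun u : ℝ => w j + s j * u) (s j) t := by
            simpa using ((hasDerivAt_id t).const_mul (s j)).const_add (w j)
          exact (hB.rpow_const (Or.inl (hBpos j).ne')).const_mul (c j)
        have := hAp.fun_mul hf
        convert this using 1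
        case e'_4 => rfl
        case e'_5 => rfl
        rw [hHdef]
        simp only [Finset.mul_sum, ← Finset.sum_add_distrib]
        apply Finset.sum_congr rfl
        intro j _
        have e1 : (w j + s j * t) ^ (-γ) = (w j + s j * t) ^ (-(γ+1)) * (w j + s j * t) := by
          have h := Real.rpow_add (hBpos j) (-(γ+1)) 1
          rw [Real.rpow_one, show -(γ+1) + 1 = -γ from by ring] at h
          exact h
        have e2 : (w p + s p * t) ^ γ = (w p + s p * t) ^ (γ-1) * (w p + s p * t) := by
          have h := Real.rpow_add hApos (γ-1) 1
          rw [Real.rpow_one, show γ - 1 + 1 = γ from by ring] at h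
          exact h
        have e3 : (-γ) - 1 = -(γ+1) := by ring
        rw [e3, e1, e2]
        ring
      have hroll : ∀ i : Fin n, ∃ t, t ∈ Ioo (z i.castSucc) (z i.succ) ∧
          γ * (w p + s p * t) ^ (γ-1) * H t = 0 := by
        intro i
        have hlt : z i.castSucc < z i.succ := hz Fin.castSucc_lt_succ
        have hsub : Icc (z i.castSucc) (z i.succ) ⊆ Ioo (-1:ℝ) 1 := fun u hu =>
          ⟨lt_of_lt_of_le (hzI i.castSucc).1 hu.1, lt_of_le_of_lt hu.2 (hzI i.succ).2⟩
        have := exists_hasDerivAt_eq_zero hlt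
          (fun u hu => ((key u (hsub hu)).continuousAt.continuousWithinAt))
          (by simp only [hzero, mul_zero])
          (fun u hu => key u (hsub (Ioo_subset_Icc_self hu)))
        obtain ⟨t, ht1, ht2⟩ := this
        exact ⟨t, ht1, ht2⟩
      choose ζ hmem hP using hroll
      have hζI : ∀ i, ζ i ∈ Ioo (-1:ℝ) 1 := fun i =>
        ⟨lt_trans (hzI i.castSucc).1 (hmem i).1, lt_trans (hmem i).2 (hzI i.succ).2⟩
      have hH0 : ∀ i, H (ζ i) = 0 := by
        intro i
        have hApz := Real.rpow_pos_of_pos (base_pos (hs p) (hw p) (hζI i)) (γ-1)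
        exact (mul_eq_zero.mp (hP i)).resolve_left (ne_of_gt (mul_pos hγ hApz))
      have hζmono : StrictMono ζ := by
        intro i i' hii'
        calc ζ i < z i.succ := (hmem i).2
        _ ≤ z i'.castSucc := hz.monotone (by
            rw [Fin.le_def]; simp only [Fin.val_succ, Fin.coe_castSucc]
            exact hii')
        _ < ζ i' := (hmem i').1
      obtain ⟨q', hq'⟩ := Fin.exists_succAbove_eq hqp
      have hpairne : s p ≠ s q ∨ w p ≠ w q := by
        by_contra hcon
        push_neg at hcon
        exact hqp (hinj q p hcon.1.symm hcon.2.symm)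
      refine IH (γ+1) (by linarith) (s ∘ p.succAbove) (w ∘ p.succAbove)
        (fun j => c (p.succAbove j) * (s p * w (p.succAbove j) - s (p.succAbove j) * w p))
        (fun j => hs _) ?_ (fun j => hw _) ?_ ?_ ζ hζmono hζI ?_
      · intro j k hj hk
        exact Fin.succAbove_right_injective (hs0 _ _ hj hk)
      · intro j k h1 h2
        exact Fin.succAbove_right_injective (hinj _ _ h1 h2)
      · refine ⟨q', ?_⟩
        show c (p.succAbove q') * (s p * w (p.succAbove q') - s (p.succAbove q') * w p) ≠ 0
        rw [hq']
        exact mul_ne_zero hcq (bracket_ne (hs p) (hs q) hsp (hw p) (hw q) hpairne)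
      · intro i
        have h5 : ∑ j : Fin (n+1), (c j * (s p * w j - s j * w p)) *
            (w j + s j * ζ i) ^ (-(γ+1)) = 0 := hH0 i
        rw [Fin.sum_univ_succAbove (fun j => (c j * (s p * w j - s j * w p)) *
          (w j + s j * ζ i) ^ (-(γ+1))) p] at h5
        simpa [Function.comp] using h5

lemma det_ne_zero' {β : ℝ} (hβ : 0 < β) {m : ℕ} (x y : Fin m → ℝ)
    (hx : StrictMono x) (hy : StrictMono y)
    (hxI : ∀ i, x i ∈ Ioo (-1:ℝ) 1) (hyI : ∀ i, y i ∈ Ioo (-1:ℝ) 1) :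
    (Matrix.of fun i j => (1 - 2 * x i * y j + y j ^ 2) ^ (-β : ℝ)).det ≠ 0 := by
  intro hdet
  obtain ⟨v, hv, hMv⟩ := (Matrix.exists_mulVec_eq_zero_iff).mpr hdet
  classical
  set s : Fin m → ℝ := fun j => if y j < 0 then 1 else if 0 < y j then -1 else 0 with hsdef
  set w : Fin m → ℝ := fun j => if y j = 0 then 2 else (1 + (y j)^2) / (2 * |y j|) with hwdef
  set d : Fin m → ℝ := fun j => if y j = 0 then (2:ℝ)^(β:ℝ) else (2 * |y j|)^(-β) with hddef
  have habs : ∀ j, |y j| < 1 := fun j => abs_lt.mpr ⟨(hyI j).1, (hyI j).2⟩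
  have hs : ∀ j, s j = 1 ∨ s j = 0 ∨ s j = -1 := by
    intro j; rw [hsdef]; dsimp only
    split_ifs <;> simp
  have hs0y : ∀ j, s j = 0 → y j = 0 := by
    intro j hj; rw [hsdef] at hj; dsimp only at hj
    split_ifs at hj with h1 h2
    · norm_num at hj
    · norm_num at hj
    · linarith [le_of_not_gt h1, le_of_not_gt h2]
  have hw1 : ∀ j, 1 < w j := by
    intro j; rw [hwdef]; dsimp only
    split_ifs with h
    · norm_num
    · have hy0 : 0 < |y j| := abs_pos.mpr h
      rw [lt_div_iff₀ (by linarith)]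
      nlinarith [habs j, sq_abs (y j)]
  have hKey : ∀ j (t : ℝ), t ∈ Ioo (-1:ℝ) 1 →
      (1 - 2 * t * y j + (y j)^2) ^ (-β) = d j * (w j + s j * t) ^ (-β) := by
    intro j t ht
    by_cases h : y j = 0
    · rw [hsdef, hwdef, hddef]; dsimp only
      rw [if_pos h, if_pos h, if_neg (by rw [h]; exact lt_irrefl 0), if_neg (by rw [h]; exact lt_irrefl 0)]
      rw [h]
      norm_num
      rw [← Real.rpow_add (by norm_num : (0:ℝ) < 2)]
      norm_num
    · have hy0 : 0 < |y j| := abs_pos.mpr h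
      have hprod : 1 - 2 * t * y j + (y j)^2 = (2 * |y j|) * (w j + s j * t) := by
        rw [hwdef, hsdef]; dsimp only
        rw [if_neg h]
        rcases lt_or_gt_of_ne h with hlt | hgt
        · rw [if_pos hlt, abs_of_neg hlt]
          field_simp
          ring
        · rw [if_neg (not_lt.mpr (le_of_lt hgt)), if_pos hgt, abs_of_pos hgt]
          field_simp
          ring
      rw [hprod, Real.mul_rpow (by positivity) (le_of_lt (base_pos (hs j) (hw1 j) ht))]
      rw [hddef]; dsimp only
      rw [if_neg h]
  have hsign : ∀ j k, s j = s k →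
      ((y j < 0 ∧ y k < 0) ∨ (y j = 0 ∧ y k = 0) ∨ (0 < y j ∧ 0 < y k)) := by
    intro j k h
    rw [hsdef] at h; dsimp only at h
    by_cases h1 : y j < 0 <;> by_cases h2 : y k < 0
    · exact Or.inl ⟨h1, h2⟩
    · rw [if_pos h1, if_neg h2] at h
      split_ifs at h <;> norm_num at h
    · rw [if_neg h1, if_pos h2] at h
      split_ifs at h <;> norm_num at h
    · rw [if_neg h1, if_neg h2] at h
      by_cases h3 : 0 < y j <;> by_cases h4 : 0 < y k
      · exact Or.inr (Or.inr ⟨h3, h4⟩)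
      · rw [if_pos h3, if_neg h4] at h; norm_num at h
      · rw [if_neg h3, if_pos h4] at h; norm_num at h
      · exact Or.inr (Or.inl ⟨le_antisymm (not_lt.mp h3) (not_lt.mp h1),
          le_antisymm (not_lt.mp h4) (not_lt.mp h2)⟩)
  have hinj : ∀ j k, s j = s k → w j = w k → j = k := by
    intro j k hsjk hwjk
    rcases hsign j k hsjk with ⟨h1, h2⟩ | ⟨h1, h2⟩ | ⟨h1, h2⟩
    · rw [hwdef] at hwjk; dsimp only at hwjk
      rw [if_neg (ne_of_lt h1), if_neg (ne_of_lt h2), abs_of_neg h1, abs_of_neg h2] at hwjk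
      have heq : (1 + y j ^ 2) * (2 * -y k) = (1 + y k ^ 2) * (2 * -y j) :=
        (div_eq_div_iff (by linarith) (by linarith)).mp hwjk
      have h5 : (y j - y k) * (1 - y j * y k) = 0 := by linear_combination heq / 2
      have hab : y j * y k < 1 := by
        nlinarith [mul_pos (by linarith [(hyI j).1] : (0:ℝ) < 1 + y j)
          (by linarith : (0:ℝ) < -y k), (hyI k).1]
      rcases mul_eq_zero.mp h5 with h6 | h6
      · exact hy.injective (sub_eq_zero.mp h6)
      · linarith
    · exact hy.injective (h1.trans h2.symm)
    · rw [hwdef] at hwjk; dsimp only at hwjk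
      rw [if_neg (ne_of_gt h1), if_neg (ne_of_gt h2), abs_of_pos h1, abs_of_pos h2] at hwjk
      have heq : (1 + y j ^ 2) * (2 * y k) = (1 + y k ^ 2) * (2 * y j) :=
        (div_eq_div_iff (by linarith) (by linarith)).mp hwjk
      have h5 : (y j - y k) * (1 - y j * y k) = 0 := by linear_combination -heq / 2
      have hab : y j * y k < 1 := by
        nlinarith [mul_pos (by linarith [(hyI j).2] : (0:ℝ) < 1 - y j)
          (by linarith : (0:ℝ) < y k), (hyI k).2]
      rcases mul_eq_zero.mp h5 with h6 | h6
      · exact hy.injective (sub_eq_zero.mp h6)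
      · linarith
  have hd_pos : ∀ j, 0 < d j := by
    intro j; rw [hddef]; dsimp only
    split_ifs with h
    · exact Real.rpow_pos_of_pos (by norm_num) _
    · exact Real.rpow_pos_of_pos (by positivity) _
  obtain ⟨j₀, hj₀⟩ := Function.ne_iff.mp hv
  refine zero_count m β hβ s w (fun j => v j * d j) hs
    (fun j k hj hk => hy.injective ((hs0y j hj).trans (hs0y k hk).symm))
    hw1 hinj ⟨j₀, mul_ne_zero hj₀ (hd_pos j₀).ne'⟩ x hx hxI ?_
  intro i
  have h6 := congrFun hMv i
  simp only [Matrix.mulVec, dotProduct, Matrix.of_apply, Pi.zero_apply] at h6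
  calc ∑ j, (v j * d j) * (w j + s j * x i) ^ (-β)
      = ∑ j, (1 - 2 * x i * y j + y j ^ 2) ^ (-β) * v j := by
        refine Finset.sum_congr rfl fun j _ => ?_
        rw [hKey j (x i) (hxI i)]
        ring
    _ = 0 := h6


lemma perm_sum_lt {m : ℕ} (L : Fin m → Fin m → ℝ)
    (hL : ∀ i i' j j' : Fin m, i < i' → j < j' → L i j + L i' j' < L i j' + L i' j) :
    ∀ σ : Equiv.Perm (Fin m), σ ≠ 1 → ∑ i, L i i < ∑ i, L i (σ i) := by
  suffices H : ∀ N (σ : Equiv.Perm (Fin m)), σ.support.card ≤ N → σ ≠ 1 →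
      ∑ i, L i i < ∑ i, L i (σ i) from fun σ h => H σ.support.card σ le_rfl h
  intro N
  induction N with
  | zero =>
    intro σ hcard hσ
    exfalso
    rw [Nat.le_zero, Finset.card_eq_zero, Equiv.Perm.support_eq_empty_iff] at hcard
    exact hσ hcard
  | succ N IH =>
    intro σ hcard hσ
    have hne : σ.support.Nonempty := by
      rw [Finset.nonempty_iff_ne_empty, Ne, Equiv.Perm.support_eq_empty_iff]
      exact hσ
    set k := σ.support.min' hne with hk
    have hkmem : k ∈ σ.support := σ.support.min'_mem hne
    have hkmoved : σ k ≠ k := Equiv.Perm.mem_support.mp hkmem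
    have hmin : ∀ a, σ a ≠ a → k ≤ a := fun a ha =>
      σ.support.min'_le a (Equiv.Perm.mem_support.mpr ha)
    have hfix : ∀ a, a < k → σ a = a := fun a ha => by
      by_contra h; exact absurd (hmin a h) (not_le.mpr ha)
    have hσk : k < σ k := by
      rcases lt_or_gt_of_ne hkmoved with h | h
      · exact absurd (σ.injective (hfix (σ k) h)) hkmoved
      · exact h
    set j := σ⁻¹ k with hjdef
    have hσj : σ j = k := σ.apply_symm_apply k
    have hjk : k < j := by
      rcases lt_trichotomy j k with h | h | h
      · exact absurd ((hfix j h).symm.trans hσj) (ne_of_lt h)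
      · exfalso; rw [h] at hσj; exact hkmoved hσj
      · exact h
    set σ' := σ * Equiv.swap k j with hσ'def
    have hσ'k : σ' k = k := by
      rw [hσ'def]; simp only [Equiv.Perm.coe_mul, Function.comp_apply, Equiv.swap_apply_left]
      exact hσj
    have hσ'j : σ' j = σ k := by
      rw [hσ'def]; simp only [Equiv.Perm.coe_mul, Function.comp_apply, Equiv.swap_apply_right]
    have hσ'x : ∀ a, a ≠ k → a ≠ j → σ' a = σ a := fun a h1 h2 => by
      rw [hσ'def]; simp only [Equiv.Perm.coe_mul, Function.comp_apply,
        Equiv.swap_apply_of_ne_of_ne h1 h2]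
    have hsub : σ'.support ⊆ σ.support.erase k := by
      intro a ha
      rw [Equiv.Perm.mem_support] at ha
      rw [Finset.mem_erase, Equiv.Perm.mem_support]
      constructor
      · intro h; rw [h] at ha; exact ha hσ'k
      · by_cases h1 : a = j
        · rw [h1, hσj]; exact ne_of_gt hjk |>.symm
        · intro h2
          by_cases h0 : a = k
          · rw [h0] at ha; exact ha hσ'k
          · rw [hσ'x a h0 h1] at ha; exact ha h2
    have hcard' : σ'.support.card ≤ N := by
      have h1 := Finset.card_le_card hsub
      have h2 := Finset.card_erase_lt_of_mem hkmem
      omega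
    have hsplit : ∀ τ : Equiv.Perm (Fin m), ∑ i, L i (τ i) =
        L k (τ k) + (L j (τ j) + ∑ i ∈ (Finset.univ.erase k).erase j, L i (τ i)) := by
      intro τ
      rw [← Finset.add_sum_erase _ _ (Finset.mem_univ k),
        ← Finset.add_sum_erase _ _ (Finset.mem_erase.mpr ⟨ne_of_gt hjk, Finset.mem_univ j⟩)]
    have hexch : ∑ i, L i (σ' i) < ∑ i, L i (σ i) := by
      rw [hsplit σ, hsplit σ', hσ'k, hσ'j, hσj]
      have hrest : ∑ i ∈ (Finset.univ.erase k).erase j, L i (σ' i)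
          = ∑ i ∈ (Finset.univ.erase k).erase j, L i (σ i) := by
        refine Finset.sum_congr rfl fun a ha => ?_
        rw [Finset.mem_erase, Finset.mem_erase] at ha
        rw [hσ'x a ha.2.1 ha.1]
      rw [hrest]
      have := hL k j k (σ k) hjk hσk
      linarith
    rcases eq_or_ne σ' 1 with h1 | h1
    · have he : ∑ i, L i (σ' i) = ∑ i, L i i := by rw [h1]; simp
      linarith
    · exact lt_trans (IH σ' hcard' h1) hexch

lemma E_pos' {x y : ℝ} (hx : x ∈ Ioo (-1:ℝ) 1) (hy : y ∈ Ioo (-1:ℝ) 1) :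
    0 < 1 - 2 * x * y + y ^ 2 := by
  nlinarith [sq_nonneg (x - y), hx.1, hx.2]

lemma E_submod {x x' u u' : ℝ} (hxI : x ∈ Ioo (-1:ℝ) 1) (hxI' : x' ∈ Ioo (-1:ℝ) 1)
    (huI : u ∈ Ioo (-1:ℝ) 1) (huI' : u' ∈ Ioo (-1:ℝ) 1) (hx : x < x') (hu : u < u') :
    (1 - 2*x*u + u^2) * (1 - 2*x'*u' + u'^2) < (1 - 2*x*u' + u'^2) * (1 - 2*x'*u + u^2) := by
  have hfac : (1 - 2*x*u' + u'^2) * (1 - 2*x'*u + u^2)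
      - (1 - 2*x*u + u^2) * (1 - 2*x'*u' + u'^2) = 2*(x' - x)*(u' - u)*(1 - u*u') := by ring
  have huu : u * u' < 1 := by nlinarith [huI.1, huI.2, huI'.1, huI'.2]
  nlinarith [mul_pos (mul_pos (by linarith : (0:ℝ) < 2*(x'-x)) (by linarith : (0:ℝ) < u'-u))
    (by linarith : (0:ℝ) < 1 - u*u')]

/-- For every `β > 0`, the kernel `K(x,y) = (1 - 2xy + y²)^(-β)` is strictly
totally positive on `(-1,1) × (-1,1)`. -/
theorem ultraspherical_kernel_stp (β : ℝ) (hβ : 0 < β) :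
    ∀ m : ℕ, 0 < m → ∀ x y : Fin m → ℝ, StrictMono x → StrictMono y →
      (∀ i, x i ∈ Set.Ioo (-1 : ℝ) 1) → (∀ i, y i ∈ Set.Ioo (-1 : ℝ) 1) →
      0 < (Matrix.of fun i j => (1 - 2 * x i * y j + y j ^ 2) ^ (-β : ℝ)).det := by
  intro m hm x y hx hy hxI hyI
  classical
  set E : Fin m → Fin m → ℝ := fun i j => 1 - 2 * x i * y j + y j ^ 2 with hE
  have hEpos : ∀ i j, 0 < E i j := fun i j => E_pos' (hxI i) (hyI j)
  set Q : Equiv.Perm (Fin m) → ℝ := fun σ => ∏ i, E (σ i) i with hQ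
  have hQpos : ∀ σ, 0 < Q σ := fun σ => Finset.prod_pos fun i _ => hEpos _ _
  -- determinant formula for general exponent
  have hdet : ∀ t : ℝ, (Matrix.of fun i j => (E i j) ^ (-t)).det
      = Q 1 ^ (-t) + ∑ σ ∈ Finset.univ.erase (1 : Equiv.Perm (Fin m)),
          ((Equiv.Perm.sign σ : ℤ) : ℝ) * Q σ ^ (-t) := by
    intro t
    rw [Matrix.det_apply, ← Finset.add_sum_erase _ _ (Finset.mem_univ 1)]
    congr 1
    · simp only [Equiv.Perm.sign_one, one_smul, Equiv.Perm.coe_one, id_eq, Matrix.of_apply]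
      rw [Real.finset_prod_rpow _ _ (fun i _ => (hEpos i i).le)]
      rfl
    · refine Finset.sum_congr rfl fun σ _ => ?_
      rw [Units.smul_def, zsmul_eq_mul]
      simp only [Matrix.of_apply]
      rw [Real.finset_prod_rpow _ _ (fun i _ => (hEpos (σ i) i).le)]
  -- Q 1 < Q σ for σ ≠ 1
  have hQgt : ∀ σ : Equiv.Perm (Fin m), σ ≠ 1 → Q 1 < Q σ := by
    intro σ hσ
    rw [← Real.exp_log (hQpos 1), ← Real.exp_log (hQpos σ), Real.exp_lt_exp, hQ]
    dsimp only
    rw [Real.log_prod (fun i _ => (hEpos _ _).ne'),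
      Real.log_prod (fun i _ => (hEpos _ _).ne')]
    have := perm_sum_lt (fun i j => Real.log (E j i)) ?_ σ hσ
    · simpa using this
    · intro i i' j j' hii hjj
      have h1 := E_submod (hxI j) (hxI j') (hyI i) (hyI i') (hx hjj) (hy hii)
      have h2 : Real.log ((E j i) * (E j' i')) < Real.log ((E j i') * (E j' i)) :=
        Real.log_lt_log (mul_pos (hEpos j i) (hEpos j' i')) h1
      rw [Real.log_mul (hEpos j i).ne' (hEpos j' i').ne',
        Real.log_mul (hEpos j i').ne' (hEpos j' i).ne'] at h2
      linarith
  -- large exponent positivity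
  have hbig : ∃ B : ℝ, β ≤ B ∧ 0 < (Matrix.of fun i j => (E i j) ^ (-B)).det := by
    rcases (Finset.univ.erase (1 : Equiv.Perm (Fin m))).eq_empty_or_nonempty with hER | hER
    · refine ⟨β, le_rfl, ?_⟩
      rw [hdet β, hER, Finset.sum_empty, add_zero]
      exact Real.rpow_pos_of_pos (hQpos 1) _
    · obtain ⟨σ₀, hσ₀mem, hσ₀min⟩ := Finset.exists_min_image _ (fun σ => Q σ) hER
      have hσ₀ne : σ₀ ≠ 1 := (Finset.mem_erase.mp hσ₀mem).1
      set ρ : ℝ := Q σ₀ / Q 1 with hρ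
      have hρ1 : 1 < ρ := (one_lt_div (hQpos 1)).mpr (hQgt σ₀ hσ₀ne)
      have hlogρ : 0 < Real.log ρ := Real.log_pos hρ1
      set κ : ℕ := (Finset.univ.erase (1 : Equiv.Perm (Fin m))).card with hκ
      have hκpos : 0 < κ := Finset.card_pos.mpr hER
      set B : ℝ := max β ((Real.log κ + 1) / Real.log ρ) with hB
      refine ⟨B, le_max_left _ _, ?_⟩
      have hBnn : (0:ℝ) ≤ B := le_trans hβ.le (le_max_left _ _)
      have hρB : ρ ^ (-B) < 1 / κ := by
        rw [Real.rpow_def_of_pos (by linarith : (0:ℝ) < ρ)]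
        rw [show (1:ℝ)/κ = Real.exp (-(Real.log κ)) from ?_]
        · apply Real.exp_lt_exp.mpr
          have hBge : (Real.log κ + 1) / Real.log ρ ≤ B := le_max_right _ _
          have : Real.log κ + 1 ≤ B * Real.log ρ := by
            rwa [div_le_iff₀ hlogρ] at hBge
          nlinarith
        · rw [Real.exp_neg, Real.exp_log (by exact_mod_cast hκpos)]
          rw [one_div]
      have hbound : ∀ σ ∈ Finset.univ.erase (1 : Equiv.Perm (Fin m)),
          Q σ ^ (-B) ≤ Q 1 ^ (-B) * ρ ^ (-B) := by
        intro σ hσmem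
        have h1 : Q σ₀ ≤ Q σ := hσ₀min σ hσmem
        have h2 : Q σ ^ (-B) ≤ Q σ₀ ^ (-B) :=
          Real.rpow_le_rpow_of_nonpos (hQpos σ₀) h1 (neg_nonpos.mpr hBnn)
        calc Q σ ^ (-B) ≤ Q σ₀ ^ (-B) := h2
        _ = (Q 1 * ρ) ^ (-B) := by
            rw [hρ, mul_div_assoc']
            rw [mul_comm (Q 1) (Q σ₀), mul_div_assoc, div_self (hQpos 1).ne', mul_one]
        _ = Q 1 ^ (-B) * ρ ^ (-B) := Real.mul_rpow (hQpos 1).le (by positivity)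
      rw [hdet B]
      have htail : ∀ σ ∈ Finset.univ.erase (1 : Equiv.Perm (Fin m)),
          -(Q 1 ^ (-B) * ρ ^ (-B)) ≤ ((Equiv.Perm.sign σ : ℤ) : ℝ) * Q σ ^ (-B) := by
        intro σ hσmem
        have hQn : (0:ℝ) ≤ Q σ ^ (-B) := Real.rpow_nonneg (hQpos σ).le _
        have hprodn : (0:ℝ) ≤ Q 1 ^ (-B) * ρ ^ (-B) :=
          mul_nonneg (Real.rpow_nonneg (hQpos 1).le _)
            (Real.rpow_nonneg (by linarith : (0:ℝ) ≤ ρ) _)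
        rcases Int.units_eq_one_or (Equiv.Perm.sign σ) with h | h <;> rw [h]
        · simp only [Units.val_one, Int.cast_one, one_mul]
          linarith
        · simp only [Units.val_neg, Units.val_one, Int.cast_neg, Int.cast_one, neg_one_mul]
          exact neg_le_neg (hbound σ hσmem)
      have hsum : -(κ * (Q 1 ^ (-B) * ρ ^ (-B))) ≤
          ∑ σ ∈ Finset.univ.erase (1 : Equiv.Perm (Fin m)),
            ((Equiv.Perm.sign σ : ℤ) : ℝ) * Q σ ^ (-B) := by
        calc -(κ * (Q 1 ^ (-B) * ρ ^ (-B)))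
            = ∑ _σ ∈ Finset.univ.erase (1 : Equiv.Perm (Fin m)),
              -(Q 1 ^ (-B) * ρ ^ (-B)) := by
              rw [Finset.sum_const, hκ]
              push_cast
              ring
        _ ≤ _ := Finset.sum_le_sum htail
      have hfinal : 0 < Q 1 ^ (-B) - κ * (Q 1 ^ (-B) * ρ ^ (-B)) := by
        have h3 : κ * ρ ^ (-B) < 1 := by
          have := (mul_lt_mul_iff_right₀ (by exact_mod_cast hκpos : (0:ℝ) < κ)).mpr hρB
          rwa [mul_one_div, div_self (by exact_mod_cast hκpos.ne' : (κ:ℝ) ≠ 0)] at this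
        have h4 : 0 < Q 1 ^ (-B) := Real.rpow_pos_of_pos (hQpos 1) _
        nlinarith
      linarith
  -- intermediate value argument
  obtain ⟨B, hβB, hBpos⟩ := hbig
  have hcont : Continuous fun t : ℝ => (Matrix.of fun i j => (E i j) ^ (-t)).det := by
    apply Continuous.matrix_det
    apply continuous_matrix
    intro i j
    simp only [Matrix.of_apply]
    have heq : (fun t : ℝ => (E i j) ^ (-t)) = fun t => Real.exp (Real.log (E i j) * (-t)) := by
      funext t
      exact Real.rpow_def_of_pos (hEpos i j) _
    rw [heq]
    exact Real.continuous_exp.comp (continuous_const.mul continuous_neg)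
  show 0 < (Matrix.of fun i j => (E i j) ^ (-β)).det
  by_contra hneg
  push_neg at hneg
  have hne := det_ne_zero' hβ x y hx hy hxI hyI
  have hlt : (Matrix.of fun i j => (E i j) ^ (-β)).det < 0 := lt_of_le_of_ne hneg hne
  have h0mem : (0:ℝ) ∈ Icc ((Matrix.of fun i j => (E i j) ^ (-β)).det)
      ((Matrix.of fun i j => (E i j) ^ (-B)).det) := ⟨hlt.le, hBpos.le⟩
  obtain ⟨t₀, ht₀mem, ht₀⟩ := intermediate_value_Icc hβB hcont.continuousOn h0mem
  exact det_ne_zero' (lt_of_lt_of_le hβ ht₀mem.1) x y hx hy hxI hyI ht₀
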